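/- arXiv:math/9912213 — 5 statements merged into one kernel-verified Lean document; each statement's English description precedes it below -/
import Mathlib

section
/- Let σ be a facet of the cone ℚ_{≥0}A with primitive integral support function F_σ. Then E_σ(β) := {λ ∈ k(A∩σ)/ℤ(A∩σ) : β - λ ∈ ℕA + ℤ(A∩σ)} is nonempty if and only if F_σ(β) ∈ F_σ(ℕA). -/
open scoped BigOperators

/-- Cast an integer vector to a vector over `k`. -/
def castVec (k : Type*) [Field k] {d : ℕ} (v : Fin d → ℤ) : Fin d → k :=
  fun i => (v i : k)

/-- Cast an integer vector to a rational vector. -/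
def castQVec {d : ℕ} (v : Fin d → ℤ) : Fin d → ℚ := fun i => (v i : ℚ)

/-- The `j`-th column of `A` viewed over `ℚ`. -/
def aQ {d n : ℕ} (a : Fin n → Fin d → ℤ) (j : Fin n) : Fin d → ℚ := fun i => (a j i : ℚ)

/-- The monoid `ℕA` inside `k^d`. -/
def NAk (k : Type*) [Field k] {d n : ℕ} (a : Fin n → Fin d → ℤ) : AddSubmonoid (Fin d → k) :=
  AddSubmonoid.closure (Set.range fun j => castVec k (a j))

/-- The group `ℤ(A∩τ)` inside `k^d`. -/
def Zk (k : Type*) [Field k] {d n : ℕ} (a : Fin n → Fin d → ℤ) (τ : Set (Fin n)) :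
    AddSubgroup (Fin d → k) :=
  AddSubgroup.closure ((fun j => castVec k (a j)) '' τ)

/-- The `k`-linear span `k(A∩τ)` inside `k^d`. -/
def kspan (k : Type*) [Field k] {d n : ℕ} (a : Fin n → Fin d → ℤ) (τ : Set (Fin n)) :
    Submodule k (Fin d → k) :=
  Submodule.span k ((fun j => castVec k (a j)) '' τ)

/-- The set `E_τ(β) = {λ ∈ k(A∩τ)/ℤ(A∩τ) : β - λ ∈ ℕA + ℤ(A∩τ)}`,
realized inside the quotient of `k^d` by `ℤ(A∩τ)`. -/
def Eface (k : Type*) [Field k] {d n : ℕ} (a : Fin n → Fin d → ℤ) (τ : Set (Fin n))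
    (β : Fin d → k) : Set ((Fin d → k) ⧸ Zk k a τ) :=
  { x | ∃ lam : Fin d → k, lam ∈ kspan k a τ ∧ QuotientAddGroup.mk lam = x ∧
      ∃ m ∈ NAk k a, ∃ z ∈ Zk k a τ, β - lam = m + z }

/-- The monoid `ℕA` inside `ℤ^d`. -/
def NAint {d n : ℕ} (a : Fin n → Fin d → ℤ) : AddSubmonoid (Fin d → ℤ) :=
  AddSubmonoid.closure (Set.range a)

/-- The group `ℤ(A∩τ)` inside `ℤ^d`. -/
def Zint {d n : ℕ} (a : Fin n → Fin d → ℤ) (τ : Set (Fin n)) : AddSubgroup (Fin d → ℤ) :=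
  AddSubgroup.closure (a '' τ)

/-- A face of the cone `ℚ_{≥0}A`: the zero set on `A` of a supporting linear functional. -/
def IsFace {d n : ℕ} (a : Fin n → Fin d → ℤ) (τ : Set (Fin n)) : Prop :=
  ∃ F : (Fin d → ℚ) →ₗ[ℚ] ℚ, (∀ j, 0 ≤ F (aQ a j)) ∧ τ = {j | F (aQ a j) = 0}

/-- Integer dot product. -/
def dotZ {d : ℕ} (c v : Fin d → ℤ) : ℤ := ∑ i, c i * v i

/-- The `k`-linear extension of the linear form with integral coefficient vector `c`. -/
def dotK (k : Type*) [Field k] {d : ℕ} (c : Fin d → ℤ) (β : Fin d → k) : k :=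
  ∑ i, (c i : k) * β i

/-- `c` is the coefficient vector of the primitive integral support function of the facet `σ`:
nonnegative on the columns, vanishing exactly on the columns in `σ`, and with value group `ℤ`
on `ℤA`. -/
def IsPrimSupp {d n : ℕ} (a : Fin n → Fin d → ℤ) (σ : Set (Fin n)) (c : Fin d → ℤ) : Prop :=
  (∀ j, 0 ≤ dotZ c (a j)) ∧ (∀ j, dotZ c (a j) = 0 ↔ j ∈ σ) ∧
  (∃ u : Fin n → ℤ, ∑ j, u j * dotZ c (a j) = 1)

/-- A facet: a face of dimension `d-1`. -/
def IsFacet {d n : ℕ} (a : Fin n → Fin d → ℤ) (σ : Set (Fin n)) : Prop :=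
  IsFace a σ ∧ Module.finrank ℚ (Submodule.span ℚ (aQ a '' σ)) = d - 1

/-- All columns of `A` lie on a common affine hyperplane off the origin. -/
def OnHyperplane {d n : ℕ} (a : Fin n → Fin d → ℤ) : Prop :=
  ∃ h : Fin d → ℚ, ∀ j, ∑ i, h i * (a j i : ℚ) = 1

/-- The matrix `A` has rank `d`. -/
def FullRank {d n : ℕ} (a : Fin n → Fin d → ℤ) : Prop :=
  Submodule.span ℚ (Set.range (aQ a)) = ⊤

/-- The rational cone `ℚ_{≥0}A`. -/
def coneQ {d n : ℕ} (a : Fin n → Fin d → ℤ) : Set (Fin d → ℚ) :=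
  {x | ∃ c : Fin n → ℚ, (∀ j, 0 ≤ c j) ∧ x = ∑ j, c j • aQ a j}

/-- Normality of the semigroup: `ℕA = ℤA ∩ ℚ_{≥0}A`. -/
def IsNormal {d n : ℕ} (a : Fin n → Fin d → ℤ) : Prop :=
  ∀ v : Fin d → ℤ, v ∈ Zint a Set.univ → castQVec v ∈ coneQ a → v ∈ NAint a

/-- Coordinatewise cast `ℤ^d → ℚ^d` as an additive monoid homomorphism. -/
def castQhom (d : ℕ) : (Fin d → ℤ) →+ (Fin d → ℚ) where
  toFun v := fun i => (v i : ℚ)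
  map_zero' := by funext i; simp
  map_add' u v := by funext i; simp

/-- The lattice `(ℚ(A∩τ)) ∩ ℤA` inside `ℤ^d`. -/
def latticeQτ {d n : ℕ} (a : Fin n → Fin d → ℤ) (τ : Set (Fin n)) :
    AddSubgroup (Fin d → ℤ) :=
  Zint a Set.univ ⊓
    AddSubgroup.comap (castQhom d) (Submodule.span ℚ (aQ a '' τ)).toAddSubgroup

section Aux

def Lk (k : Type*) [Field k] [CharZero k] {d : ℕ} (c : Fin d → ℤ) : (Fin d → k) →ₗ[k] k where
  toFun x := ∑ i, (c i : k) * x i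
  map_add' x y := by simp [mul_add, Finset.sum_add_distrib]
  map_smul' r x := by simp [Finset.mul_sum, mul_left_comm]

lemma Lk_castVec (k : Type*) [Field k] [CharZero k] {d : ℕ} (c v : Fin d → ℤ) :
    Lk k c (castVec k v) = ((dotZ c v : ℤ) : k) := by
  simp [Lk, castVec, dotZ]

def castHomK (k : Type*) [Field k] [CharZero k] (d : ℕ) : (Fin d → ℤ) →+ (Fin d → k) where
  toFun v := castVec k v
  map_zero' := by funext i; simp [castVec]
  map_add' u v := by funext i; simp [castVec]

def psiK (k : Type*) [Field k] [CharZero k] (d : ℕ) : (Fin d → ℚ) →+ (Fin d → k) where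
  toFun x := fun i => (x i : k)
  map_zero' := by funext i; simp
  map_add' u v := by funext i; exact Rat.cast_add _ _

lemma psiK_span (k : Type*) [Field k] [CharZero k] {d : ℕ} (S : Set (Fin d → ℚ)) (x : Fin d → ℚ)
    (hx : x ∈ Submodule.span ℚ S) : psiK k d x ∈ Submodule.span k (psiK k d '' S) := by
  induction hx using Submodule.span_induction with
  | mem y hy => exact Submodule.subset_span ⟨y, hy, rfl⟩
  | zero => simp
  | add y z _ _ hy hz => rw [map_add]; exact Submodule.add_mem _ hy hz
  | smul q y _ hy =>
      have : psiK k d (q • y) = (q : k) • psiK k d y := by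
        funext i; exact Rat.cast_mul _ _
      rw [this]; exact Submodule.smul_mem _ _ hy

end Aux

/-- For a facet `σ` with primitive integral support function `F_σ` (coefficient
vector `c`), `E_σ(β)` is nonempty iff `F_σ(β) ∈ F_σ(ℕA)`. -/
theorem stmt2 {d n : ℕ} (a : Fin n → Fin d → ℤ) (k : Type*) [Field k] [CharZero k]
    (hA : OnHyperplane a) (hrank : FullRank a)
    (σ : Set (Fin n)) (c : Fin d → ℤ)
    (hfacet : IsFacet a σ) (hsupp : IsPrimSupp a σ c) (β : Fin d → k) :
    (Eface k a σ β).Nonempty ↔ ∃ v ∈ NAint a, dotK k c β = ((dotZ c v : ℤ) : k) := by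
  obtain ⟨hnonneg, hzero, u, hu⟩ := hsupp
  obtain ⟨j0, ht0⟩ : ∃ j0, dotZ c (a j0) ≠ 0 := by
    by_contra h
    push_neg at h
    simp [h] at hu
  have hdotK : ∀ x : Fin d → k, dotK k c x = Lk k c x := fun x => rfl
  have hker : kspan k a σ ≤ LinearMap.ker (Lk k c) := by
    rw [kspan, Submodule.span_le]
    rintro _ ⟨j, hj, rfl⟩
    simp [LinearMap.mem_ker, Lk_castVec, (hzero j).2 hj]
  have hZker : ∀ z ∈ Zk k a σ, Lk k c z = 0 := by
    intro z hz
    have h2 : Zk k a σ ≤ (Lk k c).toAddMonoidHom.ker := by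
      rw [Zk, AddSubgroup.closure_le]
      rintro _ ⟨j, hj, rfl⟩
      simp [AddMonoidHom.mem_ker, LinearMap.toAddMonoidHom, Lk_castVec, (hzero j).2 hj]
    exact h2 hz
  have hNA : NAk k a = (NAint a).map (castHomK k d) := by
    rw [NAk, NAint, AddMonoidHom.map_mclosure]
    congr 1
    ext x
    constructor
    · rintro ⟨j, rfl⟩; exact ⟨a j, ⟨j, rfl⟩, rfl⟩
    · rintro ⟨_, ⟨j, rfl⟩, rfl⟩; exact ⟨j, rfl⟩
  constructor
  · rintro ⟨x, lam, hlam, -, m, hm, z, hz, heq⟩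
    rw [hNA] at hm
    obtain ⟨v, hv, rfl⟩ := hm
    refine ⟨v, hv, ?_⟩
    have hb : β = castHomK k d v + z + lam := by
      have := sub_eq_iff_eq_add.mp heq
      rw [this]
    rw [hdotK, hb, map_add, map_add, hZker z hz, hker hlam]
    show Lk k c (castVec k v) + 0 + 0 = _
    rw [Lk_castVec, add_zero, add_zero]
  · rintro ⟨v, hv, hβ⟩
    have hFQ : ∀ j, Lk ℚ c (aQ a j) = ((dotZ c (a j) : ℤ) : ℚ) := fun j => Lk_castVec ℚ c (a j)
    have hspanle : Submodule.span ℚ (aQ a '' σ) ≤ LinearMap.ker (Lk ℚ c) := by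
      rw [Submodule.span_le]
      rintro _ ⟨j, hj, rfl⟩
      simp [LinearMap.mem_ker, hFQ, (hzero j).2 hj]
    have hsurj : Function.Surjective (Lk ℚ c) := by
      intro y
      refine ⟨(y / ((dotZ c (a j0) : ℤ) : ℚ)) • aQ a j0, ?_⟩
      rw [map_smul, hFQ]
      rw [smul_eq_mul, div_mul_cancel₀ _ (Int.cast_ne_zero.mpr ht0)]
    have hd : Module.finrank ℚ (LinearMap.ker (Lk ℚ c)) = d - 1 := by
      have h1 := LinearMap.finrank_range_add_finrank_ker (Lk ℚ c)
      rw [LinearMap.range_eq_top.mpr hsurj] at h1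
      simp [finrank_top, Module.finrank_self, Module.finrank_pi] at h1
      omega
    have hkereq : Submodule.span ℚ (aQ a '' σ) = LinearMap.ker (Lk ℚ c) :=
      Submodule.eq_of_le_of_finrank_eq hspanle (by rw [hfacet.2, hd])
    -- every column lies in span σ ⊔ line through a j0
    have hcol : ∀ j, aQ a j ∈ Submodule.span ℚ (aQ a '' σ) ⊔ Submodule.span ℚ {aQ a j0} := by
      intro j
      have hk : aQ a j - (((dotZ c (a j) : ℤ) : ℚ) / ((dotZ c (a j0) : ℤ) : ℚ)) • aQ a j0 ∈
          LinearMap.ker (Lk ℚ c) := by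
        rw [LinearMap.mem_ker, map_sub, map_smul, hFQ, hFQ]
        rw [smul_eq_mul, div_mul_cancel₀ _ (Int.cast_ne_zero.mpr ht0), sub_self]
      rw [← hkereq] at hk
      have hrepr : aQ a j =
          (aQ a j - (((dotZ c (a j) : ℤ) : ℚ) / ((dotZ c (a j0) : ℤ) : ℚ)) • aQ a j0) +
          (((dotZ c (a j) : ℤ) : ℚ) / ((dotZ c (a j0) : ℤ) : ℚ)) • aQ a j0 := by
        abel
      rw [hrepr]
      exact Submodule.add_mem _ (Submodule.mem_sup_left hk)
        (Submodule.mem_sup_right (Submodule.smul_mem _ _ (Submodule.subset_span rfl)))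
    have htopQ : Submodule.span ℚ (aQ a '' σ) ⊔ Submodule.span ℚ {aQ a j0} = ⊤ := by
      rw [← top_le_iff, ← hrank, Submodule.span_le]
      rintro _ ⟨j, rfl⟩
      exact hcol j
    -- transfer to k
    set w : Fin d → k := castVec k (a j0) with hw
    have hpsiA : ∀ j, psiK k d (aQ a j) = castVec k (a j) := by
      intro j
      funext i
      simp [psiK, aQ, castVec]
    have hM : ∀ x : Fin d → ℚ, psiK k d x ∈ kspan k a σ ⊔ Submodule.span k {w} := by
      intro x
      have hx : x ∈ Submodule.span ℚ (aQ a '' σ) ⊔ Submodule.span ℚ {aQ a j0} := htopQ ▸ trivial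
      obtain ⟨y, hy, z, hz, rfl⟩ := Submodule.mem_sup.mp hx
      rw [map_add]
      refine Submodule.add_mem _ (Submodule.mem_sup_left ?_) (Submodule.mem_sup_right ?_)
      · have := psiK_span k _ y hy
        refine Submodule.span_mono ?_ this
        rintro _ ⟨_, ⟨j, hj, rfl⟩, rfl⟩
        exact ⟨j, hj, (hpsiA j).symm ▸ rfl⟩
      · have := psiK_span k _ z hz
        refine Submodule.span_mono ?_ this
        rintro _ ⟨_, rfl, rfl⟩
        rw [hpsiA j0]
        rfl
    have htopk : kspan k a σ ⊔ Submodule.span k {w} = ⊤ := by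
      rw [eq_top_iff]
      intro x _
      have hx : x = ∑ i, x i • (Pi.single i (1 : k) : Fin d → k) := by
        funext i'
        simp [Pi.single_apply, Finset.sum_ite_eq']
      rw [hx]
      refine Submodule.sum_mem _ fun i _ => Submodule.smul_mem _ _ ?_
      have : (Pi.single i (1 : k) : Fin d → k) = psiK k d (Pi.single i (1 : ℚ)) := by
        funext i'
        simp [psiK, Pi.single_apply, apply_ite (fun q : ℚ => (q : k))]
      rw [this]
      exact hM _
    -- conclude
    have hxker : β - castVec k v ∈ LinearMap.ker (Lk k c) := by
      rw [LinearMap.mem_ker, map_sub, Lk_castVec, ← hdotK, hβ, sub_self]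
    have hxin : β - castVec k v ∈ kspan k a σ ⊔ Submodule.span k {w} := htopk ▸ trivial
    obtain ⟨s, hs, t', ht', hst⟩ := Submodule.mem_sup.mp hxin
    obtain ⟨t, rfl⟩ := Submodule.mem_span_singleton.mp ht'
    have hLw : Lk k c w = ((dotZ c (a j0) : ℤ) : k) := Lk_castVec k c (a j0)
    have hteq : t * ((dotZ c (a j0) : ℤ) : k) = 0 := by
      have h0 : Lk k c (β - castVec k v) = 0 := LinearMap.mem_ker.mp hxker
      rw [← hst] at h0
      rw [map_add, map_smul, hker hs, hLw, zero_add, smul_eq_mul] at h0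
      exact h0
    have ht0k : ((dotZ c (a j0) : ℤ) : k) ≠ 0 := Int.cast_ne_zero.mpr ht0
    have htz : t = 0 := by
      rcases mul_eq_zero.mp hteq with h | h
      · exact h
      · exact absurd h ht0k
    have hsx : β - castVec k v = s := by
      rw [← hst, htz, zero_smul, add_zero]
    refine ⟨QuotientAddGroup.mk s, s, hs, rfl, castVec k v, ?_, 0, zero_mem _, ?_⟩
    · rw [hNA]
      exact ⟨v, hv, rfl⟩
    · have : β - s = castVec k v := by
        rw [← hsx]
        abel
      rw [this, add_zero]
end

section
/- For any face τ of the cone ℚ_{≥0}A, the cardinality of E_τ(β) is at most the index [(ℚ(A∩τ)) ∩ ℤA : ℤ(A∩τ)]; in particular, if any two elements λ, λ' of E_τ(β) have difference λ - λ' lying in (k(A∩τ)) ∩ ℤA, and (k(A∩τ)) ∩ ℤA = (ℚ(A∩τ)) ∩ ℤA, then distinct elements of E_τ(β) map to distinct classes in ((ℚ(A∩τ)) ∩ ℤA)/ℤ(A∩τ). -/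
open scoped BigOperators

/-! ### Auxiliary lemmas for `stmt5` -/

section Stmt5Aux

variable {d n : ℕ}

/-- Coordinatewise cast `ℤ^d → k^d` as an additive monoid homomorphism. -/
def castKhom (k : Type*) [Field k] (d : ℕ) : (Fin d → ℤ) →+ (Fin d → k) where
  toFun v := castVec k v
  map_zero' := by funext i; simp [castVec]
  map_add' u v := by funext i; simp [castVec]

lemma Zk_eq_map (k : Type*) [Field k] (a : Fin n → Fin d → ℤ) (τ : Set (Fin n)) :
    Zk k a τ = (Zint a τ).map (castKhom k d) := by
  rw [Zint, AddMonoidHom.map_closure, Set.image_image]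
  rfl

/-- Descent: an integer vector whose `k`-realization lies in the `k`-span of the columns on `τ`
has its `ℚ`-realization in the `ℚ`-span. -/
lemma descent (k : Type*) [Field k] [CharZero k] (a : Fin n → Fin d → ℤ) (τ : Set (Fin n))
    (v : Fin d → ℤ) (hv : castVec k v ∈ kspan k a τ) :
    castQVec v ∈ Submodule.span ℚ (aQ a '' τ) := by
  by_contra hnot
  set W := Submodule.span ℚ (aQ a '' τ) with hW
  have hq : W.mkQ (castQVec v) ≠ 0 := by
    simpa [Submodule.mkQ_apply, Submodule.Quotient.mk_eq_zero] using hnot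
  obtain ⟨φ, hφ⟩ : ∃ φ : Module.Dual ℚ ((Fin d → ℚ) ⧸ W), φ (W.mkQ (castQVec v)) ≠ 0 := by
    by_contra h
    push_neg at h
    exact hq ((Module.forall_dual_apply_eq_zero_iff ℚ _).mp h)
  set f : (Fin d → ℚ) →ₗ[ℚ] ℚ := φ.comp W.mkQ with hf
  have hfW : ∀ x ∈ W, f x = 0 := by
    intro x hx
    have : W.mkQ x = 0 := by
      simpa [Submodule.mkQ_apply, Submodule.Quotient.mk_eq_zero] using hx
    simp [hf, this]
  set c : Fin d → ℚ := fun i => f (fun j => if i = j then 1 else 0) with hc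
  have key : ∀ u : Fin d → ℤ,
      (∑ i, ((c i : k)) * ((u i : ℤ) : k)) = ((f (castQVec u) : ℚ) : k) := by
    intro u
    rw [LinearMap.pi_apply_eq_sum_univ f (castQVec u)]
    rw [Rat.cast_sum]
    refine Finset.sum_congr rfl fun i _ => ?_
    rw [smul_eq_mul, Rat.cast_mul]
    simp [castQVec, hc, mul_comm]
  set fk : (Fin d → k) →ₗ[k] k :=
    { toFun := fun y => ∑ i, (c i : k) * y i
      map_add' := fun y z => by
        simp [mul_add, Finset.sum_add_distrib]
      map_smul' := fun r y => by
        simp [Finset.mul_sum, mul_left_comm] } with hfk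
  have hgen : ((fun j => castVec k (a j)) '' τ) ⊆ (LinearMap.ker fk : Set (Fin d → k)) := by
    rintro _ ⟨j, hj, rfl⟩
    have h0 : f (aQ a j) = 0 := hfW _ (Submodule.subset_span ⟨j, hj, rfl⟩)
    have h2 : fk (castVec k (a j)) = ((f (castQVec (a j)) : ℚ) : k) := key (a j)
    have h3 : castQVec (a j) = aQ a j := rfl
    simp only [SetLike.mem_coe, LinearMap.mem_ker]
    rw [h2, h3, h0, Rat.cast_zero]
  have hker : fk (castVec k v) = 0 := by
    have hle : kspan k a τ ≤ LinearMap.ker fk := Submodule.span_le.mpr hgen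
    exact hle hv
  have hcv : fk (castVec k v) = ((f (castQVec v) : ℚ) : k) := key v
  rw [hcv] at hker
  have : f (castQVec v) = 0 := by exact_mod_cast hker
  exact hφ (by simpa [hf] using this)

/-- Clearing denominators: a vector in the `ℚ`-span of the columns on `τ` has a positive
integer multiple in `ℤ(A∩τ)`. -/
lemma clear_denoms (a : Fin n → Fin d → ℤ) (τ : Set (Fin n)) (x : Fin d → ℚ)
    (hx : x ∈ Submodule.span ℚ (aQ a '' τ)) :
    ∃ N : ℕ, 0 < N ∧ ∃ w ∈ Zint a τ, ∀ i, (N : ℚ) * x i = (w i : ℚ) := by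
  induction hx using Submodule.span_induction with
  | mem y hy =>
    obtain ⟨j, hj, rfl⟩ := hy
    exact ⟨1, one_pos, a j, AddSubgroup.subset_closure ⟨j, hj, rfl⟩, fun i => by simp [aQ]⟩
  | zero => exact ⟨1, one_pos, 0, zero_mem _, fun i => by simp⟩
  | add y z hy hz ihy ihz =>
    obtain ⟨N₁, hN₁, w₁, hw₁, he₁⟩ := ihy
    obtain ⟨N₂, hN₂, w₂, hw₂, he₂⟩ := ihz
    refine ⟨N₁ * N₂, Nat.mul_pos hN₁ hN₂, (N₂ : ℤ) • w₁ + (N₁ : ℤ) • w₂,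
      add_mem (zsmul_mem hw₁ _) (zsmul_mem hw₂ _), fun i => ?_⟩
    have h1 := he₁ i
    have h2 := he₂ i
    simp only [Pi.add_apply, Pi.smul_apply, smul_eq_mul]
    push_cast
    linear_combination (N₂ : ℚ) * h1 + (N₁ : ℚ) * h2
  | smul q y hy ihy =>
    obtain ⟨N₁, hN₁, w₁, hw₁, he₁⟩ := ihy
    refine ⟨q.den * N₁, Nat.mul_pos q.pos hN₁, q.num • w₁, zsmul_mem hw₁ _, fun i => ?_⟩
    have h1 := he₁ i
    have hden : (q.den : ℚ) * q = (q.num : ℚ) := by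
      have hne : (q.den : ℚ) ≠ 0 := by exact_mod_cast q.den_nz
      have h := Rat.num_div_den q
      rw [div_eq_iff hne] at h
      rw [h]; ring
    simp only [Pi.smul_apply, smul_eq_mul]
    push_cast
    linear_combination (N₁ : ℚ) * (y i) * hden + q.num * h1

end Stmt5Aux

/-- `|E_τ(β)| ≤ [(ℚ(A∩τ)) ∩ ℤA : ℤ(A∩τ)]`; moreover the difference of (the
representatives of) any two elements of `E_τ(β)` lies in `(k(A∩τ)) ∩ ℤA`. -/
theorem stmt5 {d n : ℕ} (a : Fin n → Fin d → ℤ) (k : Type*) [Field k] [CharZero k]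
    (τ : Set (Fin n)) (hτ : IsFace a τ) (β : Fin d → k) :
    (Eface k a τ β).ncard ≤ (Zint a τ).relIndex (latticeQτ a τ) ∧
    (∀ lam lam' : Fin d → k, lam ∈ kspan k a τ → lam' ∈ kspan k a τ →
      (∃ m ∈ NAk k a, ∃ z ∈ Zk k a τ, β - lam = m + z) →
      (∃ m ∈ NAk k a, ∃ z ∈ Zk k a τ, β - lam' = m + z) →
      lam - lam' ∈ Zk k a Set.univ) := by
  classical
  have hZkmono : Zk k a τ ≤ Zk k a Set.univ :=
    AddSubgroup.closure_mono (Set.image_mono (Set.subset_univ τ))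
  have hNA : ∀ m ∈ NAk k a, m ∈ Zk k a Set.univ := by
    intro m hm
    have : NAk k a ≤ (Zk k a Set.univ).toAddSubmonoid := by
      rw [NAk, AddSubmonoid.closure_le]
      rintro _ ⟨j, rfl⟩
      exact AddSubgroup.subset_closure ⟨j, Set.mem_univ j, rfl⟩
    exact this hm
  have part2 : ∀ lam lam' : Fin d → k, lam ∈ kspan k a τ → lam' ∈ kspan k a τ →
      (∃ m ∈ NAk k a, ∃ z ∈ Zk k a τ, β - lam = m + z) →
      (∃ m ∈ NAk k a, ∃ z ∈ Zk k a τ, β - lam' = m + z) →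
      lam - lam' ∈ Zk k a Set.univ := by
    rintro lam lam' _ _ ⟨m, hm, z, hz, he⟩ ⟨m', hm', z', hz', he'⟩
    have heq : lam - lam' = (m' + z') - (m + z) := by
      have h1 : lam = β - (m + z) := by rw [← he]; ring
      have h2 : lam' = β - (m' + z') := by rw [← he']; ring
      rw [h1, h2]; ring
    rw [heq]
    exact sub_mem (add_mem (hNA m' hm') (hZkmono hz')) (add_mem (hNA m hm) (hZkmono hz))
  refine ⟨?_, part2⟩
  rcases (Eface k a τ β).eq_empty_or_nonempty with hE | ⟨x₀, hx₀⟩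
  · simp [hE]
  obtain ⟨lam₀, hlam₀, hmk₀, hex₀⟩ := hx₀
  set L := latticeQτ a τ with hLdef
  set H := (Zint a τ).addSubgroupOf L with hHdef
  -- finiteness of the quotient
  have hLfg : AddGroup.FG ↥L := by
    have h1 : (AddSubgroup.toIntSubmodule L).FG := IsNoetherian.noetherian _
    have h2 : L.FG := by
      have := (Submodule.fg_iff_addSubgroup_fg (AddSubgroup.toIntSubmodule L)).mp h1
      simpa using this
    exact (AddGroup.fg_iff_addSubgroup_fg L).mpr h2
  have hfin : Finite (↥L ⧸ H) := by
    refine AddCommGroup.finite_of_fg_torsion _ ?_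
    intro q
    induction q using QuotientAddGroup.induction_on with
    | H l =>
      have hl : l.1 ∈ Zint a Set.univ ∧
          castQhom d l.1 ∈ (Submodule.span ℚ (aQ a '' τ)).toAddSubgroup := l.2
      obtain ⟨N, hN, w, hw, hNw⟩ := clear_denoms a τ (castQhom d l.1) hl.2
      rw [isOfFinAddOrder_iff_nsmul_eq_zero]
      refine ⟨N, hN, ?_⟩
      have hsmul : (N : ℤ) • l.1 = w := by
        funext i
        have h' : (N : ℚ) * ((l.1 i : ℤ) : ℚ) = ((w i : ℤ) : ℚ) := hNw i
        have : ((N : ℤ) • l.1) i = (N : ℤ) * l.1 i := by simp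
        rw [this]
        exact_mod_cast h'
      have hmemH : (N • l : ↥L) ∈ H := by
        rw [hHdef, AddSubgroup.mem_addSubgroupOf]
        have : ((N • l : ↥L) : Fin d → ℤ) = (N : ℤ) • l.1 := by
          push_cast
          simp
        rw [this, hsmul]
        exact hw
      have : (N • (QuotientAddGroup.mk l) : ↥L ⧸ H) = QuotientAddGroup.mk (N • l) := by
        simp
      rw [this, QuotientAddGroup.eq_zero_iff]
      exact hmemH
  -- the injection into the quotient
  have hch : ∀ x : ↥(Eface k a τ β), ∃ u : Fin d → ℤ, u ∈ L ∧
      ∃ lam : Fin d → k, lam ∈ kspan k a τ ∧ QuotientAddGroup.mk lam = x.1 ∧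
        castVec k u = lam - lam₀ := by
    rintro ⟨x, lam, hlam, hmk, hex⟩
    have hdiff : lam - lam₀ ∈ Zk k a Set.univ := part2 lam lam₀ hlam hlam₀ hex hex₀
    rw [Zk_eq_map k a Set.univ] at hdiff
    obtain ⟨u, hu, huc⟩ := hdiff
    have hucast : castVec k u = lam - lam₀ := huc
    have hkspan : castVec k u ∈ kspan k a τ := by
      rw [hucast]; exact sub_mem hlam hlam₀
    refine ⟨u, ⟨hu, ?_⟩, lam, hlam, hmk, hucast⟩
    exact descent k a τ u hkspan
  choose u hu lam hlamspan hlammk hlamcast using hch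
  have hcard : Nat.card ↥(Eface k a τ β) ≤ Nat.card (↥L ⧸ H) := by
    refine Nat.card_le_card_of_injective
      (fun x => (QuotientAddGroup.mk (⟨u x, hu x⟩ : ↥L) : ↥L ⧸ H)) ?_
    intro x y hxy
    rw [QuotientAddGroup.eq] at hxy
    rw [hHdef, AddSubgroup.mem_addSubgroupOf] at hxy
    have hmemτ : u y - u x ∈ Zint a τ := by
      have hco : ((-(⟨u x, hu x⟩ : ↥L) + ⟨u y, hu y⟩ : ↥L) : Fin d → ℤ) = u y - u x := by
        push_cast
        ring
      rwa [hco] at hxy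
    have h2 : castVec k (u y) - castVec k (u x) ∈ Zk k a τ := by
      rw [Zk_eq_map k a τ]
      exact ⟨u y - u x, hmemτ, by
        show castVec k (u y - u x) = _
        funext i
        simp [castVec]⟩
    have h3 : lam y - lam x ∈ Zk k a τ := by
      have heq : castVec k (u y) - castVec k (u x) = lam y - lam x := by
        rw [hlamcast x, hlamcast y]; ring
      rwa [heq] at h2
    have hmkeq : (QuotientAddGroup.mk (lam x) : (Fin d → k) ⧸ Zk k a τ)
        = QuotientAddGroup.mk (lam y) := by
      rw [QuotientAddGroup.eq]
      have : -lam x + lam y = lam y - lam x := by ring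
      rw [this]
      exact h3
    apply Subtype.ext
    rw [← hlammk x, ← hlammk y, hmkeq]
  calc (Eface k a τ β).ncard = Nat.card ↥(Eface k a τ β) :=
        (Nat.card_coe_set_eq _).symm
    _ ≤ Nat.card (↥L ⧸ H) := hcard
    _ = (Zint a τ).relIndex L := rfl
end

section
/- Assume the semigroup ℕA is normal, i.e., ℕA = ℤA ∩ ℚ_{≥0}A. Then for every face τ of the cone ℚ_{≥0}A, one has (ℚ(A∩τ)) ∩ ℤA = ℤ(A∩τ). -/
open scoped BigOperators

/-- If `ℕA` is normal then for every face `τ`,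
`(ℚ(A∩τ)) ∩ ℤA = ℤ(A∩τ)`. -/
theorem stmt9 {d n : ℕ} (a : Fin n → Fin d → ℤ) (hnorm : IsNormal a)
    (τ : Set (Fin n)) (hτ : IsFace a τ) :
    ∀ v : Fin d → ℤ, v ∈ Zint a Set.univ →
      castQVec v ∈ Submodule.span ℚ (aQ a '' τ) → v ∈ Zint a τ := by
  classical
  obtain ⟨F, hF0, hFτ⟩ := hτ
  intro v hv hvspan
  obtain ⟨m, f, g, hsum⟩ := Submodule.mem_span_set'.mp hvspan
  choose j hjτ hja using fun i : Fin m => (g i).2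
  have hvQ : castQVec v = ∑ i, f i • aQ a (j i) := by
    rw [← hsum]; exact Finset.sum_congr rfl fun i _ => by rw [hja i]
  obtain ⟨N, hN⟩ := exists_nat_ge (∑ i, |f i|)
  have hfN : ∀ i, 0 ≤ f i + N := by
    intro i
    have h1 : -f i ≤ |f i| := neg_le_abs _
    have h2 : |f i| ≤ ∑ i, |f i| :=
      Finset.single_le_sum (fun i _ => abs_nonneg (f i)) (Finset.mem_univ i)
    linarith
  set s : Fin d → ℤ := ∑ i, N • a (j i) with hs
  set w : Fin d → ℤ := v + s with hw
  have hcastsum : castQVec s = ∑ i, (N : ℚ) • aQ a (j i) := by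
    funext x
    simp only [castQVec, hs, Finset.sum_apply, Pi.smul_apply, aQ, smul_eq_mul, nsmul_eq_mul, Pi.mul_apply, Pi.natCast_apply]
    push_cast
    exact Finset.sum_congr rfl fun i _ => by ring
  have hwQ : castQVec w = ∑ i, (f i + N) • aQ a (j i) := by
    have hadd : castQVec w = castQVec v + castQVec s := by
      funext x; simp [castQVec, hw]
    rw [hadd, hvQ, hcastsum, ← Finset.sum_add_distrib]
    exact Finset.sum_congr rfl fun i _ => (add_smul _ _ _).symm
  -- membership of w in ZA
  have hsmem : ∀ (σ : Set (Fin n)), (∀ i, j i ∈ σ) → s ∈ Zint a σ := by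
    intro σ hσ
    refine AddSubgroup.sum_mem _ fun i _ => AddSubgroup.nsmul_mem _ ?_ N
    exact AddSubgroup.subset_closure (Set.mem_image_of_mem a (hσ i))
  have hwZ : w ∈ Zint a Set.univ :=
    AddSubgroup.add_mem _ hv (hsmem Set.univ fun i => Set.mem_univ _)
  -- membership of w in the cone
  have hwcone : castQVec w ∈ coneQ a := by
    refine ⟨fun p => ∑ i ∈ Finset.univ.filter (fun i => j i = p), (f i + N), ?_, ?_⟩
    · intro p; exact Finset.sum_nonneg fun i _ => hfN i
    · rw [hwQ]
      rw [← Finset.sum_fiberwise Finset.univ j (fun i => (f i + N) • aQ a (j i))]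
      refine Finset.sum_congr rfl fun p _ => ?_
      rw [Finset.sum_smul]
      refine Finset.sum_congr rfl fun i hi => ?_
      rw [(Finset.mem_filter.mp hi).2]
  -- normality gives w ∈ ℕA
  have hwNA : w ∈ NAint a := hnorm w hwZ hwcone
  have hwspan : w ∈ Submodule.span ℕ (Set.range a) := by
    have h : w ∈ (Submodule.span ℕ (Set.range a)).toAddSubmonoid := by
      rw [Submodule.span_nat_eq_addSubmonoidClosure]; exact hwNA
    exact h
  obtain ⟨mc, hmc⟩ := (Submodule.mem_span_range_iff_exists_fun (R := ℕ)).mp hwspan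
  -- F vanishes on castQVec w
  have hFw : F (castQVec w) = 0 := by
    rw [hwQ, map_sum]
    refine Finset.sum_eq_zero fun i _ => ?_
    rw [map_smul]
    have : F (aQ a (j i)) = 0 := by
      have := hjτ i; rw [hFτ] at this; exact this
    rw [this, smul_zero]
  have hwQ2 : castQVec w = ∑ p, (mc p : ℚ) • aQ a p := by
    funext x
    rw [← hmc]
    simp only [castQVec, Finset.sum_apply, Pi.smul_apply, aQ, smul_eq_mul, nsmul_eq_mul, Pi.mul_apply, Pi.natCast_apply]
    push_cast
    exact Finset.sum_congr rfl fun p _ => by ring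
  have hterms : ∀ p ∈ Finset.univ, (0:ℚ) ≤ (mc p : ℚ) * F (aQ a p) := by
    intro p _
    exact mul_nonneg (by positivity) (hF0 p)
  have hzero : ∀ p ∈ Finset.univ, (mc p : ℚ) * F (aQ a p) = 0 := by
    rw [← Finset.sum_eq_zero_iff_of_nonneg hterms]
    rw [← hFw, hwQ2, map_sum]
    refine Finset.sum_congr rfl fun p _ => ?_
    rw [map_smul, smul_eq_mul]
  have hmc0 : ∀ p, p ∉ τ → mc p = 0 := by
    intro p hp
    have hFp : F (aQ a p) ≠ 0 := by
      intro h0; exact hp (by rw [hFτ]; exact h0)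
    have := hzero p (Finset.mem_univ p)
    have : (mc p : ℚ) = 0 := by
      rcases mul_eq_zero.mp this with h | h
      · exact h
      · exact absurd h hFp
    exact_mod_cast this
  have hwτ : w ∈ Zint a τ := by
    rw [← hmc]
    refine AddSubgroup.sum_mem _ fun p _ => ?_
    by_cases hp : p ∈ τ
    · exact AddSubgroup.nsmul_mem _ (AddSubgroup.subset_closure (Set.mem_image_of_mem a hp)) _
    · rw [hmc0 p hp, zero_smul]; exact AddSubgroup.zero_mem _
  have hsτ : s ∈ Zint a τ := hsmem τ hjτ
  have : v = w - s := by rw [hw]; ring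
  rw [this]
  exact AddSubgroup.sub_mem _ hwτ hsτ
end

section
/- In the monomial curve case (d = 2, columns a_j = (1, i_j) with 0 = i_1 < i_2 < ... < i_n coprime), the set of holes ℰ(A) := ((ℕA + ℤa_1) ∩ (ℕA + ℤa_n)) \ ℕA equals {β ∈ ℤ^2 : F_{σ_1}(β) ∈ F_{σ_1}(ℕA) and F_{σ_2}(β) ∈ F_{σ_2}(ℕA)} \ ℕA, where F_{σ_1}(s) = s_2 and F_{σ_2}(s) = i_n s_1 - s_2. -/
open scoped BigOperators

/-- Monomial curve case: the set of holes
`ℰ(A) = ((ℕA + ℤa_1) ∩ (ℕA + ℤa_n)) \ ℕA` equals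
`{β ∈ ℤ² : F_{σ_1}(β) ∈ F_{σ_1}(ℕA), F_{σ_2}(β) ∈ F_{σ_2}(ℕA)} \ ℕA`, where
`F_{σ_1}(s) = s_2` and `F_{σ_2}(s) = i_n s_1 - s_2`. -/
theorem stmt14 (n : ℕ) (i : Fin (n + 1) → ℤ) (h0 : i 0 = 0) (hmono : StrictMono i)
    (hcop : ∃ u : Fin (n + 1) → ℤ, ∑ j, u j * i j = 1) :
    let a : Fin (n + 1) → Fin 2 → ℤ := fun j => ![1, i j]
    ({v | ∃ m ∈ NAint a, ∃ z : ℤ, v = m + z • a 0} ∩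
        {v | ∃ m ∈ NAint a, ∃ z : ℤ, v = m + z • a (Fin.last n)}) \ (NAint a : Set _) =
      {v : Fin 2 → ℤ | (∃ m ∈ NAint a, v 1 = m 1) ∧
          (∃ m ∈ NAint a,
            i (Fin.last n) * v 0 - v 1 = i (Fin.last n) * m 0 - m 1)} \ (NAint a : Set _) := by
  intro a
  congr 1
  ext v
  simp only [Set.mem_inter_iff, Set.mem_setOf_eq]
  constructor
  · rintro ⟨⟨m, hm, z, hv⟩, ⟨m', hm', z', hv'⟩⟩
    constructor
    · refine ⟨m, hm, ?_⟩
      have : v 1 = m 1 + z * i 0 := by rw [hv]; simp [a]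
      rw [this, h0]; ring
    · refine ⟨m', hm', ?_⟩
      have h0' : v 0 = m' 0 + z' * 1 := by rw [hv']; simp [a]
      have h1' : v 1 = m' 1 + z' * i (Fin.last n) := by rw [hv']; simp [a]
      rw [h0', h1']; ring
  · rintro ⟨⟨m, hm, h1⟩, ⟨m', hm', h2⟩⟩
    constructor
    · refine ⟨m, hm, v 0 - m 0, ?_⟩
      funext k
      fin_cases k
      · simp [a]
      · simp [a, h0, h1]
    · refine ⟨m', hm', v 0 - m' 0, ?_⟩
      funext k
      fin_cases k
      · simp [a]
      · simp only [Pi.add_apply, Pi.smul_apply, smul_eq_mul, a,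
          Matrix.cons_val_one, Matrix.head_cons, Fin.mk_one, Matrix.cons_val_zero]
        linarith
end

section
/- Let M be a monomial ideal in k[∂_1,...,∂_n] of the form M_χ = ⟨∂^u : Au ∈ χ + ℕA⟩ for some χ ∈ ℤA, where the columns of A lie on a common hyperplane off the origin. If (u, τ) is a standard pair of M_χ, then the ℚ_{≥0}-cone generated by {a_j : j ∈ τ} is a proper face of ℚ_{≥0}A, and moreover τ = {i : a_i ∈ ℚ_{≥0}{a_j : j ∈ τ}}. -/
open scoped BigOperators

/-- `∂^w ∈ M_χ`, i.e. `Aw ∈ χ + ℕA`. -/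
def MemM {d n : ℕ} (a : Fin n → Fin d → ℤ) (χ : Fin d → ℤ) (w : Fin n → ℕ) : Prop :=
  ∃ m ∈ NAint a, (∑ j, (w j : ℤ) • a j) = χ + m

/-- `(u, τ)` is a standard pair of the monomial ideal `M_χ`. -/
def IsStdPair {d n : ℕ} (a : Fin n → Fin d → ℤ) (χ : Fin d → ℤ) (u : Fin n → ℕ)
    (τ : Set (Fin n)) : Prop :=
  (∀ j ∈ τ, u j = 0) ∧
  (¬∃ v : Fin n → ℕ, (∀ j, j ∉ τ → v j = 0) ∧ MemM a χ (u + v)) ∧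
  (∀ j, j ∉ τ → ∃ v : Fin n → ℕ, (∀ j', j' ∉ τ ∪ {j} → v j' = 0) ∧ MemM a χ (u + v))

/-- The cone `ℚ_{≥0}{a_j : j ∈ τ}`. -/
def coneOf {d n : ℕ} (a : Fin n → Fin d → ℤ) (τ : Set (Fin n)) : Set (Fin d → ℚ) :=
  {x | ∃ c : Fin n → ℚ, (∀ j, 0 ≤ c j) ∧ (∀ j, j ∉ τ → c j = 0) ∧ x = ∑ j, c j • aQ a j}

noncomputable section StdPairAux


/-- dot product over ℚ -/
def dotq {d : ℕ} (f x : Fin d → ℚ) : ℚ := ∑ i, f i * x i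

lemma dotq_smul_right {d : ℕ} (f x : Fin d → ℚ) (t : ℚ) : dotq f (t • x) = t * dotq f x := by
  simp only [dotq, Finset.mul_sum, Pi.smul_apply, smul_eq_mul]
  exact Finset.sum_congr rfl (fun i _ => by ring)

lemma dotq_add_right {d : ℕ} (f x y : Fin d → ℚ) : dotq f (x + y) = dotq f x + dotq f y := by
  simp only [dotq, Pi.add_apply, mul_add, Finset.sum_add_distrib]

lemma dotq_sub_right {d : ℕ} (f x y : Fin d → ℚ) : dotq f (x - y) = dotq f x - dotq f y := by
  simp only [dotq, Pi.sub_apply, mul_sub, Finset.sum_sub_distrib]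

lemma dotq_neg_right {d : ℕ} (f x : Fin d → ℚ) : dotq f (-x) = - dotq f x := by
  simp [dotq]

lemma dotq_sub_smul_left {d : ℕ} (f g x : Fin d → ℚ) (t : ℚ) :
    dotq (g - t • f) x = dotq g x - t * dotq f x := by
  simp only [dotq, Pi.sub_apply, Pi.smul_apply, smul_eq_mul, sub_mul, Finset.sum_sub_distrib,
    Finset.mul_sum]
  congr 1
  exact Finset.sum_congr rfl (fun i _ => by ring)

lemma dotq_sum_smul {d m : ℕ} (f : Fin d → ℚ) (c : Fin m → ℚ) (w : Fin m → Fin d → ℚ) :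
    dotq f (∑ k, c k • w k) = ∑ k, c k * dotq f (w k) := by
  induction m with
  | zero => simp [dotq]
  | succ m ih =>
      rw [Fin.sum_univ_castSucc, Fin.sum_univ_castSucc (f := fun k => c k * dotq f (w k)),
        dotq_add_right, ih, dotq_smul_right]

lemma dotq_zero_right {d : ℕ} (f : Fin d → ℚ) : dotq f 0 = 0 := by simp [dotq]

lemma farkas_fin {d : ℕ} : ∀ (m : ℕ) (w : Fin m → Fin d → ℚ) (x : Fin d → ℚ),
    (¬ ∃ c : Fin m → ℚ, (∀ k, 0 ≤ c k) ∧ x = ∑ k, c k • w k) →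
    ∃ f : Fin d → ℚ, (∀ k, 0 ≤ dotq f (w k)) ∧ dotq f x < 0 := by
  intro m
  induction m with
  | zero =>
      intro w x h
      have hx : x ≠ 0 := by
        rintro rfl
        exact h ⟨0, fun k => le_refl 0, by simp⟩
      refine ⟨-x, fun k => (Fin.elim0 k), ?_⟩
      rcases Function.ne_iff.mp hx with ⟨i, hi⟩
      simp only [Pi.zero_apply] at hi
      have hpos : 0 < ∑ i, x i * x i :=
        Finset.sum_pos' (fun j _ => mul_self_nonneg _) ⟨i, Finset.mem_univ i, mul_self_pos.mpr hi⟩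
      have : dotq (-x) x = -∑ i, x i * x i := by simp [dotq]
      linarith [this]
  | succ m ih =>
      intro w x h
      have hx' : ¬ ∃ c : Fin m → ℚ, (∀ k, 0 ≤ c k) ∧ x = ∑ k, c k • w k.castSucc := by
        rintro ⟨c, hc, rfl⟩
        refine h ⟨Fin.snoc c 0, ?_, ?_⟩
        · intro k
          refine Fin.lastCases ?_ ?_ k
          · simp
          · intro i; simpa using hc i
        · rw [Fin.sum_univ_castSucc]
          simp
      obtain ⟨f, hf1, hf2⟩ := ih (fun k => w k.castSucc) x hx'
      by_cases hl : 0 ≤ dotq f (w (Fin.last m))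
      · refine ⟨f, ?_, hf2⟩
        intro k
        refine Fin.lastCases hl (fun i => hf1 i) k
      · push_neg at hl
        set wl := w (Fin.last m) with hwl
        set β := dotq f wl with hβ
        have hβne : β ≠ 0 := ne_of_lt hl
        set x' := x - (dotq f x / β) • wl with hx'def
        set w' : Fin m → Fin d → ℚ := fun k => w k.castSucc - (dotq f (w k.castSucc) / β) • wl
          with hw'def
        have hx'' : ¬ ∃ c : Fin m → ℚ, (∀ k, 0 ≤ c k) ∧ x' = ∑ k, c k • w' k := by
          rintro ⟨c, hc, hceq⟩
          set lam := dotq f x / β - ∑ k, c k * (dotq f (w k.castSucc) / β) with hlam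
          have hxeq : x = ∑ k, c k • w k.castSucc + lam • wl := by
            have : x' = ∑ k, c k • w k.castSucc
                - (∑ k, c k * (dotq f (w k.castSucc) / β)) • wl := by
              rw [hceq]
              simp only [hw'def, smul_sub, smul_smul]
              rw [Finset.sum_sub_distrib, Finset.sum_smul]
            rw [hx'def] at this
            have h2 := sub_eq_sub_iff_sub_eq_sub.mp this
            rw [hlam, sub_smul]
            linear_combination (norm := module) this
          have hlampos : 0 ≤ lam := by
            have hnum : dotq f x - ∑ k, c k * dotq f (w k.castSucc) < 0 := by
              have : 0 ≤ ∑ k, c k * dotq f (w k.castSucc) :=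
                Finset.sum_nonneg (fun k _ => mul_nonneg (hc k) (hf1 k))
              linarith
            have : lam = (dotq f x - ∑ k, c k * dotq f (w k.castSucc)) / β := by
              rw [hlam, sub_div, Finset.sum_div]
              congr 1
              exact Finset.sum_congr rfl fun k _ => by ring
            rw [this]
            exact le_of_lt (div_pos_of_neg_of_neg hnum hl)
          refine h ⟨Fin.snoc c lam, ?_, ?_⟩
          · intro k
            refine Fin.lastCases ?_ ?_ k
            · simpa using hlampos
            · intro i; simpa using hc i
          · rw [Fin.sum_univ_castSucc]
            simpa using hxeq
        obtain ⟨g, hg1, hg2⟩ := ih w' x' hx''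
        refine ⟨g - (dotq g wl / β) • f, ?_, ?_⟩
        · intro k
          induction k using Fin.lastCases with
          | last =>
              rw [dotq_sub_smul_left, ← hwl, ← hβ]
              rw [div_mul_cancel₀ _ hβne]
              simp
          | cast i =>
              have hgw := hg1 i
              rw [hw'def] at hgw
              simp only [dotq_sub_right, dotq_smul_right] at hgw
              rw [dotq_sub_smul_left]
              have heq2 : dotq f (w i.castSucc) / β * dotq g wl
                  = dotq g wl / β * dotq f (w i.castSucc) := by ring
              linarith [hgw]
        · rw [dotq_sub_smul_left]
          have hgx := hg2
          rw [hx'def] at hgx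
          simp only [dotq_sub_right, dotq_smul_right] at hgx
          have : dotq f x / β * dotq g wl = dotq g wl / β * dotq f x := by ring
          linarith [hgx]

lemma farkas_gen {d : ℕ} {ι : Type} [Fintype ι] (w : ι → Fin d → ℚ) (x : Fin d → ℚ)
    (h : ¬ ∃ c : ι → ℚ, (∀ k, 0 ≤ c k) ∧ x = ∑ k, c k • w k) :
    ∃ f : Fin d → ℚ, (∀ k, 0 ≤ dotq f (w k)) ∧ dotq f x < 0 := by
  classical
  set e := Fintype.equivFin ι with he
  have hh : ¬ ∃ c : Fin (Fintype.card ι) → ℚ, (∀ k, 0 ≤ c k) ∧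
      x = ∑ k, c k • w (e.symm k) := by
    rintro ⟨c, hc, hxeq⟩
    refine h ⟨fun j => c (e j), fun j => hc _, ?_⟩
    rw [hxeq]
    exact Fintype.sum_equiv e.symm _ _ (fun k => by simp)
  obtain ⟨f, hf1, hf2⟩ := farkas_fin (Fintype.card ι) (fun k => w (e.symm k)) x hh
  exact ⟨f, fun k => by simpa using hf1 (e k), hf2⟩

/-- dot product as a linear map -/
def dotLin {d : ℕ} (f : Fin d → ℚ) : (Fin d → ℚ) →ₗ[ℚ] ℚ where
  toFun x := dotq f x
  map_add' x y := by simp [dotq, mul_add, Finset.sum_add_distrib]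
  map_smul' t x := by
    simp only [dotq, Pi.smul_apply, smul_eq_mul, RingHom.id_apply, Finset.mul_sum]
    exact Finset.sum_congr rfl (fun i _ => by ring)

lemma dotq_sum_left {d : ℕ} {ι : Type} (s : Finset ι) (f : ι → Fin d → ℚ) (x : Fin d → ℚ) :
    dotq (∑ j ∈ s, f j) x = ∑ j ∈ s, dotq (f j) x := by
  simp only [dotq, Finset.sum_apply, Finset.sum_mul]
  exact Finset.sum_comm

-- cast lemmas
lemma castSum_apply {d n : ℕ} (a : Fin n → Fin d → ℤ) (z : Fin n → ℤ) (i : Fin d) :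
    (((∑ j, z j • a j) i : ℤ) : ℚ) = (∑ j, (z j : ℚ) • (fun i' => ((a j i' : ℤ) : ℚ))) i := by
  simp only [Finset.sum_apply, Pi.smul_apply, smul_eq_mul]
  push_cast
  rfl

lemma castVec_inj {d : ℕ} (w1 w2 : Fin d → ℤ)
    (h : ∀ i, ((w1 i : ℤ) : ℚ) = ((w2 i : ℤ) : ℚ)) : w1 = w2 := by
  funext i
  exact_mod_cast h i

lemma mem_addSubgroupClosure_range {d n : ℕ} (a : Fin n → Fin d → ℤ) (x : Fin d → ℤ)
    (hx : x ∈ AddSubgroup.closure (Set.range a)) :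
    ∃ z : Fin n → ℤ, x = ∑ j, z j • a j := by
  classical
  induction hx using AddSubgroup.closure_induction with
  | mem y hy =>
      obtain ⟨j, rfl⟩ := hy
      exact ⟨fun k => if k = j then 1 else 0, by simp⟩
  | zero => exact ⟨0, by simp⟩
  | add y z hy hz ihy ihz =>
      obtain ⟨zy, rfl⟩ := ihy
      obtain ⟨zz, rfl⟩ := ihz
      exact ⟨zy + zz, by simp [add_smul, Finset.sum_add_distrib]⟩
  | neg y hy ihy =>
      obtain ⟨zy, rfl⟩ := ihy
      exact ⟨-zy, by simp [neg_smul]⟩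

lemma natcomb_mem {d n : ℕ} (a : Fin n → Fin d → ℤ) (w : Fin n → ℕ) :
    (∑ j, (w j : ℤ) • a j) ∈ AddSubmonoid.closure (Set.range a) := by
  refine AddSubmonoid.sum_mem _ (fun j _ => ?_)
  rw [natCast_zsmul]
  exact nsmul_mem (AddSubmonoid.subset_closure (Set.mem_range_self j)) (w j)


end StdPairAux

/-- If `(u, τ)` is a standard pair of `M_χ`, then the cone generated by
`{a_j : j ∈ τ}` is a proper face of `ℚ_{≥0}A` and `τ = {i : a_i ∈ ℚ_{≥0}{a_j : j ∈ τ}}`. -/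
theorem stmt17 {d n : ℕ} (a : Fin n → Fin d → ℤ)
    (hA : OnHyperplane a) (hrank : FullRank a)
    (χ : Fin d → ℤ) (hχ : χ ∈ Zint a Set.univ)
    (u : Fin n → ℕ) (τ : Set (Fin n)) (hsp : IsStdPair a χ u τ) :
    (∃ F : (Fin d → ℚ) →ₗ[ℚ] ℚ, (∀ j, 0 ≤ F (aQ a j)) ∧
      coneOf a τ = coneOf a Set.univ ∩ {x | F x = 0} ∧
      coneOf a τ ≠ coneOf a Set.univ) ∧
    τ = {i | aQ a i ∈ coneOf a τ} := by
  classical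
  obtain ⟨hu0, hnot, hcover⟩ := hsp
  -- indicator membership in cones
  have hind : ∀ (S : Set (Fin n)) (i : Fin n), i ∈ S → aQ a i ∈ coneOf a S := by
    intro S i hi
    refine ⟨fun j => if j = i then 1 else 0, fun j => by dsimp only; split_ifs <;> norm_num, fun j hj => ?_, ?_⟩
    · rcases eq_or_ne j i with rfl | hne
      · exact absurd hi hj
      · simp [hne]
    · simp [ite_smul]
  -- τ is not everything
  have hτne : τ ≠ Set.univ := by
    intro hT
    obtain ⟨z, hz⟩ := mem_addSubgroupClosure_range a χ
      (by simpa [Zint, Set.image_univ] using hχ)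
    set v : Fin n → ℕ := fun j => (z j).toNat with hv
    refine hnot ⟨v, fun j hj => absurd (hT ▸ Set.mem_univ j) hj, ?_⟩
    refine ⟨∑ j, ((((u j : ℤ) + (v j : ℤ) - z j).toNat : ℕ) : ℤ) • a j,
      natcomb_mem a _, ?_⟩
    have hkey : ∀ j, (((u + v) j : ℕ) : ℤ)
        = z j + ((((u j : ℤ) + (v j : ℤ) - z j).toNat : ℕ) : ℤ) := by
      intro j
      have h1 : z j ≤ (v j : ℤ) := by simpa [hv] using Int.self_le_toNat (z j)
      have h2 : (0:ℤ) ≤ (u j : ℤ) + (v j : ℤ) - z j := by omega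
      simp only [Pi.add_apply]
      push_cast
      rw [Int.toNat_of_nonneg h2]
      ring
    calc ∑ j, (((u + v) j : ℕ) : ℤ) • a j
        = ∑ j, (z j • a j + ((((u j : ℤ) + (v j : ℤ) - z j).toNat : ℕ) : ℤ) • a j) := by
          refine Finset.sum_congr rfl fun j _ => ?_
          rw [← add_smul, ← hkey j]
      _ = χ + ∑ j, ((((u j : ℤ) + (v j : ℤ) - z j).toNat : ℕ) : ℤ) • a j := by
          rw [Finset.sum_add_distrib, hz]
  obtain ⟨j1, hj1⟩ : ∃ j, j ∉ τ := by
    by_contra hcon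
    push_neg at hcon
    exact hτne (Set.eq_univ_iff_forall.mpr hcon)
  -- the point γ and the face-closure σb
  set γQ : Fin d → ℚ := ∑ j, (if j ∈ τ then (1:ℚ) else 0) • aQ a j with hγQ
  set σb : Set (Fin n) := {k | ∃ s : ℚ, ∃ c : Fin n → ℚ,
    0 < s ∧ (∀ j, 0 ≤ c j) ∧ 0 < c k ∧ ∑ j, c j • aQ a j = s • γQ} with hσb
  have hτσ : ∀ i ∈ τ, i ∈ σb := by
    intro i hi
    exact ⟨1, fun j => if j ∈ τ then 1 else 0, one_pos,
      fun j => by dsimp only; split_ifs <;> norm_num, by simp [hi], by rw [one_smul]⟩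
  -- a strictly positive representation on σb
  have hrep : ∃ s : ℚ, 0 < s ∧ ∃ cb : Fin n → ℚ, (∀ j, 0 ≤ cb j) ∧
      (∀ k, k ∈ σb → 0 < cb k) ∧ (∀ k, k ∉ σb → cb k = 0) ∧
      ∑ j, cb j • aQ a j = s • γQ := by
    have hnorm : ∀ i : Fin n, ∃ c : Fin n → ℚ,
        (i ∈ σb → (0 < c i ∧ ∑ j, c j • aQ a j = γQ)) ∧
        (∀ k, 0 < c k → k ∈ σb) ∧ (∀ j, 0 ≤ c j) := by
      intro i
      by_cases h : i ∈ σb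
      · obtain ⟨s, c, hs, hc0, hci, hsum⟩ := h
        refine ⟨fun j => s⁻¹ * c j, fun _ => ⟨mul_pos (inv_pos.mpr hs) hci, ?_⟩,
          fun k hk => ?_, fun j => mul_nonneg (inv_nonneg.mpr hs.le) (hc0 j)⟩
        · calc ∑ j, (s⁻¹ * c j) • aQ a j = s⁻¹ • ∑ j, c j • aQ a j := by
                rw [Finset.smul_sum]
                exact Finset.sum_congr rfl fun j _ => (mul_smul _ _ _)
            _ = γQ := by rw [hsum, smul_smul, inv_mul_cancel₀ (ne_of_gt hs), one_smul]
        · have hck : 0 < c k := by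
            by_contra hc
            push_neg at hc
            have : s⁻¹ * c k ≤ 0 := mul_nonpos_of_nonneg_of_nonpos (inv_nonneg.mpr hs.le) hc
            exact absurd hk (not_lt.mpr this)
          exact ⟨s, c, hs, hc0, hck, hsum⟩
      · exact ⟨0, fun hi => absurd hi h, fun k hk => absurd hk (by norm_num), fun j => le_refl 0⟩
    choose cc hcc1 hcc2 hcc3 using hnorm
    set σfin := Finset.univ.filter (fun i : Fin n => i ∈ σb) with hσfin
    by_cases hne : σfin.Nonempty
    · refine ⟨(σfin.card : ℚ), by exact_mod_cast Finset.card_pos.mpr hne,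
        fun k => ∑ i ∈ σfin, cc i k, ?_, ?_, ?_, ?_⟩
      · exact fun j => Finset.sum_nonneg fun i _ => hcc3 i j
      · intro k hk
        refine Finset.sum_pos' (fun i _ => hcc3 i k) ⟨k, by simp [hσfin, hk], ?_⟩
        exact (hcc1 k hk).1
      · intro k hk
        refine Finset.sum_eq_zero fun i _ => ?_
        by_contra hik
        exact hk (hcc2 i k (lt_of_le_of_ne (hcc3 i k) (Ne.symm hik)))
      · calc ∑ j, (∑ i ∈ σfin, cc i j) • aQ a j
            = ∑ j, ∑ i ∈ σfin, cc i j • aQ a j := by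
              exact Finset.sum_congr rfl fun j _ => Finset.sum_smul
          _ = ∑ i ∈ σfin, ∑ j, cc i j • aQ a j := Finset.sum_comm
          _ = ∑ _i ∈ σfin, γQ := by
              refine Finset.sum_congr rfl fun i hi => ?_
              exact (hcc1 i (by simpa [hσfin] using hi)).2
          _ = (σfin.card : ℚ) • γQ := by
              rw [Finset.sum_const]
              exact (Nat.cast_smul_eq_nsmul ℚ _ _).symm
    · refine ⟨1, one_pos, 0, fun j => le_refl 0, ?_, fun k _ => rfl, ?_⟩
      · intro k hk
        exact absurd ⟨k, (by simp [hσfin, hk] : k ∈ σfin)⟩ hne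
      · have hγ0 : γQ = 0 := by
          rw [hγQ]
          refine Finset.sum_eq_zero fun j _ => ?_
          have hjτ : j ∉ τ := by
            intro hj
            exact hne ⟨j, by simp [hσfin, hτσ j hj]⟩
          rw [if_neg hjτ, zero_smul]
        rw [hγ0]
        simp
  -- the key zero-combination lemma
  have hZ : ∀ e : Fin n → ℚ, (∀ k, k ∉ σb → 0 ≤ e k) → ∑ k, e k • aQ a k = 0 →
      ∀ k0, 0 < e k0 → k0 ∈ σb := by
    intro e he hesum k0 hek0
    by_contra hk0
    obtain ⟨s, hs, cb, hcb0, hcbpos, hcbsupp, hcbsum⟩ := hrep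
    set σfin := Finset.univ.filter (fun i : Fin n => i ∈ σb) with hσfin
    set R : ℚ := 1 + ∑ i ∈ σfin, |e i| / cb i with hR
    have hsumnn : 0 ≤ ∑ i ∈ σfin, |e i| / cb i :=
      Finset.sum_nonneg fun i _ => div_nonneg (abs_nonneg _) (hcb0 i)
    have hR1 : (1:ℚ) ≤ R := by rw [hR]; linarith
    have hRpos : 0 < R := lt_of_lt_of_le one_pos hR1
    have hbound : ∀ k, k ∈ σb → |e k| ≤ R * cb k := by
      intro k hk
      have h1 : |e k| / cb k ≤ R := by
        have := Finset.single_le_sum (f := fun i => |e i| / cb i)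
          (fun i _ => div_nonneg (abs_nonneg _) (hcb0 i))
          (by simp [hσfin, hk] : k ∈ σfin)
        rw [hR]; linarith
      have h2 := mul_le_mul_of_nonneg_right h1 (hcb0 k)
      rwa [div_mul_cancel₀ _ (ne_of_gt (hcbpos k hk))] at h2
    have hc'0 : ∀ k, 0 ≤ R * cb k + e k := by
      intro k
      by_cases hk : k ∈ σb
      · have h1 := hbound k hk
        have h2 := neg_abs_le (e k)
        linarith
      · rw [hcbsupp k hk, mul_zero, zero_add]
        exact he k hk
    have hc'sum : ∑ k, (R * cb k + e k) • aQ a k = (R * s) • γQ := by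
      calc ∑ k, (R * cb k + e k) • aQ a k
          = ∑ k, ((R * cb k) • aQ a k) + ∑ k, e k • aQ a k := by
            rw [← Finset.sum_add_distrib]
            exact Finset.sum_congr rfl fun k _ => add_smul _ _ _
        _ = R • ∑ k, cb k • aQ a k := by
            rw [hesum, add_zero, Finset.smul_sum]
            exact Finset.sum_congr rfl fun k _ => mul_smul _ _ _
        _ = (R * s) • γQ := by rw [hcbsum, smul_smul]
    refine hk0 ⟨R * s, fun k => R * cb k + e k, mul_pos hRpos hs, hc'0, ?_, hc'sum⟩
    show 0 < R * cb k0 + e k0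
    rw [hcbsupp k0 hk0, mul_zero, zero_add]
    exact hek0
  by_cases hστ : ∀ k ∈ σb, k ∈ τ
  · -- good case : σb = τ, build the supporting functional
    have hfex : ∀ j0, j0 ∉ τ → ∃ f : Fin d → ℚ, (∀ j, 0 ≤ dotq f (aQ a j)) ∧
        (∀ i ∈ τ, dotq f (aQ a i) = 0) ∧ 0 < dotq f (aQ a j0) := by
      intro j0 hj0
      set w : (Fin n ⊕ (Fin n ⊕ Fin n)) → Fin d → ℚ := Sum.elim (fun j => aQ a j)
        (Sum.elim (fun i => if i ∈ τ then aQ a i else 0)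
          (fun i => if i ∈ τ then -aQ a i else 0)) with hw
      have hpre : ¬ ∃ c : (Fin n ⊕ (Fin n ⊕ Fin n)) → ℚ, (∀ k, 0 ≤ c k) ∧
          (-aQ a j0) = ∑ k, c k • w k := by
        rintro ⟨c, hc0, hceq⟩
        set e : Fin n → ℚ := fun k => (if k = j0 then 1 else 0) + c (Sum.inl k)
          + (if k ∈ τ then c (Sum.inr (Sum.inl k)) - c (Sum.inr (Sum.inr k)) else 0) with he
        have hsplit : ∑ k, (c (Sum.inl k)) • aQ a k
            + ∑ k, (if k ∈ τ then c (Sum.inr (Sum.inl k)) - c (Sum.inr (Sum.inr k)) else 0)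
              • aQ a k
            = ∑ k : Fin n ⊕ (Fin n ⊕ Fin n), c k • w k := by
          rw [Fintype.sum_sum_type, Fintype.sum_sum_type]
          congr 1
          rw [← Finset.sum_add_distrib]
          refine Finset.sum_congr rfl fun k _ => ?_
          by_cases hk : k ∈ τ
          · simp only [hw, Sum.elim_inr, Sum.elim_inl, if_pos hk, sub_smul, smul_neg]
            ring_nf
          · simp [hw, hk]
        have hesum : ∑ k, e k • aQ a k = 0 := by
          have expand : ∑ k, e k • aQ a k
              = ∑ k, (if k = j0 then (1:ℚ) else 0) • aQ a k
              + (∑ k, (c (Sum.inl k)) • aQ a k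
              + ∑ k, (if k ∈ τ then c (Sum.inr (Sum.inl k)) - c (Sum.inr (Sum.inr k)) else 0)
                • aQ a k) := by
            rw [← Finset.sum_add_distrib, ← Finset.sum_add_distrib]
            refine Finset.sum_congr rfl fun k _ => ?_
            rw [he]
            dsimp only
            rw [add_smul, add_smul, add_assoc]
          rw [expand, hsplit, ← hceq]
          have h1 : ∑ k, (if k = j0 then (1:ℚ) else 0) • aQ a k = aQ a j0 := by
            simp [ite_smul]
          rw [h1]
          simp
        have hepos : 0 < e j0 := by
          rw [he]
          dsimp only
          rw [if_pos rfl, if_neg hj0, add_zero]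
          linarith [hc0 (Sum.inl j0)]
        have henn : ∀ k, k ∉ σb → 0 ≤ e k := by
          intro k hk
          have hkτ : k ∉ τ := fun hh => hk (hτσ k hh)
          rw [he]
          dsimp only
          rw [if_neg hkτ, add_zero]
          have := hc0 (Sum.inl k)
          by_cases hkj : k = j0
          · rw [if_pos hkj]; linarith
          · rw [if_neg hkj]; linarith
        exact hj0 (hστ j0 (hZ e henn hesum j0 hepos))
      obtain ⟨f, hf1, hf2⟩ := farkas_gen w (-aQ a j0) hpre
      refine ⟨f, fun j => hf1 (Sum.inl j), fun i hi => ?_, ?_⟩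
      · have hle : dotq f (aQ a i) ≤ 0 := by
          have := hf1 (Sum.inr (Sum.inr i))
          rw [hw] at this
          simp only [Sum.elim_inr, if_pos hi, dotq_neg_right] at this
          linarith
        have hge : 0 ≤ dotq f (aQ a i) := hf1 (Sum.inl i)
        linarith
      · rw [dotq_neg_right] at hf2
        linarith
    choose ff hff1 hff2 hff3 using hfex
    set filt := Finset.univ.filter (fun j : Fin n => j ∉ τ) with hfilt
    set g : Fin d → ℚ :=
      ∑ j0 ∈ filt, (if h : j0 ∉ τ then ff j0 h else 0) with hg
    have hgdot : ∀ y, dotq g y = ∑ j0 ∈ filt, dotq (if h : j0 ∉ τ then ff j0 h else 0) y := by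
      intro y; rw [hg, dotq_sum_left]
    have hF1 : ∀ j, 0 ≤ dotq g (aQ a j) := by
      intro j
      rw [hgdot]
      refine Finset.sum_nonneg fun i hi => ?_
      have hiτ : i ∉ τ := by simpa [hfilt] using hi
      rw [dif_pos hiτ]
      exact hff1 i hiτ j
    have hF0 : ∀ i ∈ τ, dotq g (aQ a i) = 0 := by
      intro i hi
      rw [hgdot]
      refine Finset.sum_eq_zero fun k hk => ?_
      have hkτ : k ∉ τ := by simpa [hfilt] using hk
      rw [dif_pos hkτ]
      exact hff2 k hkτ i hi
    have hFpos : ∀ j, j ∉ τ → 0 < dotq g (aQ a j) := by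
      intro j hj
      rw [hgdot]
      refine Finset.sum_pos' (fun i hi => ?_) ⟨j, by simp [hfilt, hj], ?_⟩
      · have hiτ : i ∉ τ := by simpa [hfilt] using hi
        rw [dif_pos hiτ]
        exact hff1 i hiτ j
      · rw [dif_pos hj]
        exact hff3 j hj
    set F := dotLin g with hF
    have hFapp : ∀ x, F x = dotq g x := fun x => rfl
    have hsetEq : coneOf a τ = coneOf a Set.univ ∩ {x | F x = 0} := by
      ext x
      constructor
      · rintro ⟨c, hc0, hcsupp, rfl⟩
        refine ⟨⟨c, hc0, fun j hj => absurd (Set.mem_univ j) hj, rfl⟩, ?_⟩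
        show F _ = 0
        rw [map_sum]
        refine Finset.sum_eq_zero fun j _ => ?_
        rw [map_smul, smul_eq_mul]
        by_cases hj : j ∈ τ
        · rw [hFapp, hF0 j hj, mul_zero]
        · rw [hcsupp j hj, zero_mul]
      · rintro ⟨⟨c, hc0, -, rfl⟩, hFx⟩
        have hFx' : ∑ j, c j * dotq g (aQ a j) = 0 := by
          have : F (∑ j, c j • aQ a j) = ∑ j, c j * dotq g (aQ a j) := by
            rw [map_sum]
            exact Finset.sum_congr rfl fun j _ => by rw [map_smul, smul_eq_mul, hFapp]
          rw [← this]
          exact hFx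
        have hterm : ∀ j ∈ Finset.univ, c j * dotq g (aQ a j) = 0 := by
          rw [← Finset.sum_eq_zero_iff_of_nonneg
            (fun j _ => mul_nonneg (hc0 j) (hF1 j))] at *
          exact hFx'
        refine ⟨c, hc0, fun j hj => ?_, rfl⟩
        rcases mul_eq_zero.mp (hterm j (Finset.mem_univ j)) with h | h
        · exact h
        · exact absurd h (ne_of_gt (hFpos j hj))
    refine ⟨⟨F, fun j => hF1 j, hsetEq, ?_⟩, ?_⟩
    · intro hEq
      have hmem : aQ a j1 ∈ coneOf a τ := hEq ▸ hind Set.univ j1 (Set.mem_univ j1)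
      rw [hsetEq] at hmem
      exact absurd hmem.2 (ne_of_gt (hFpos j1 hj1))
    · ext i
      constructor
      · intro hi
        exact hind τ i hi
      · intro hi
        by_contra hiτ
        have : aQ a i ∈ coneOf a Set.univ ∩ {x | F x = 0} := hsetEq ▸ hi
        exact absurd this.2 (ne_of_gt (hFpos i hiτ))
  · -- contradiction case: there is j0 ∈ σb \ τ
    exfalso
    push_neg at hστ
    obtain ⟨j0, hj0σ, hj0τ⟩ := hστ
    obtain ⟨v, hvsupp, m₀, hm₀, heq⟩ := hcover j0 hj0τ
    set p := v j0 with hp'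
    have hp : 0 < p := by
      rcases Nat.eq_zero_or_pos p with h0 | h
      · exfalso
        refine hnot ⟨v, ?_, m₀, hm₀, heq⟩
        intro j hj
        by_cases hjj : j = j0
        · rw [hjj]; exact h0
        · exact hvsupp j (by simp [Set.mem_union, Set.mem_singleton_iff, hj, hjj])
      · exact h
    obtain ⟨s, hs, cb, hcb0, hcbpos, hcbsupp, hcbsum⟩ := hrep
    set q : Fin n → ℚ := fun k => cb k / s with hq
    have hq0 : ∀ k, 0 ≤ q k := fun k => div_nonneg (hcb0 k) hs.le
    have hqsum : ∑ k, q k • aQ a k = γQ := by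
      calc ∑ k, q k • aQ a k = s⁻¹ • ∑ k, cb k • aQ a k := by
            rw [Finset.smul_sum]
            refine Finset.sum_congr rfl fun k _ => ?_
            rw [smul_smul, hq]
            dsimp only
            rw [div_eq_inv_mul]
        _ = γQ := by rw [hcbsum, smul_smul, inv_mul_cancel₀ (ne_of_gt hs), one_smul]
    have hqj0 : 0 < q j0 := div_pos (hcbpos j0 hj0σ) hs
    set D : ℕ := ∏ k, (q k).den with hD
    have hDpos : 0 < D := Finset.prod_pos fun k _ => (q k).pos
    have hnk : ∀ k, ∃ nk : ℕ, (nk : ℚ) = (D : ℚ) * q k := by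
      intro k
      obtain ⟨t, ht⟩ := Finset.dvd_prod_of_mem (fun k => (q k).den) (Finset.mem_univ k)
      have hden : ((q k).den : ℚ) ≠ 0 := Nat.cast_ne_zero.mpr (q k).den_nz
      have hnum : ((q k).num : ℚ) = q k * (q k).den :=
        (div_eq_iff hden).mp (Rat.num_div_den (q k))
      have hnum0 : 0 ≤ (q k).num := Rat.num_nonneg.mpr (hq0 k)
      refine ⟨t * (q k).num.toNat, ?_⟩
      have htn : (((q k).num.toNat : ℕ) : ℚ) = ((q k).num : ℚ) := by
        exact_mod_cast congrArg (fun z : ℤ => (z : ℚ)) (Int.toNat_of_nonneg hnum0)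
      have hDq : (D : ℚ) = ((q k).den : ℚ) * (t : ℚ) := by
        rw [hD]; exact_mod_cast congrArg (fun z : ℕ => (z : ℚ)) ht
      push_cast
      rw [htn, hnum, hDq]
      ring
    choose nn hnn using hnk
    have hnnj0 : 1 ≤ nn j0 := by
      have h1 : (0:ℚ) < (nn j0 : ℚ) := by
        rw [hnn j0]
        exact mul_pos (by exact_mod_cast hDpos) hqj0
      have h2 : 0 < nn j0 := by exact_mod_cast h1
      omega
    set M : ℕ := p * D with hM
    set N' : Fin n → ℕ := fun k => p * nn k - (if k = j0 then p else 0) with hN'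
    have hN'cast : ∀ k, ((N' k : ℕ) : ℤ)
        = (p : ℤ) * (nn k : ℤ) - (if k = j0 then (p:ℤ) else 0) := by
      intro k
      by_cases hk : k = j0
      · subst hk
        have hle : p ≤ p * nn k := Nat.le_mul_of_pos_right p (by omega)
        simp only [hN', if_true, eq_self_iff_true]
        rw [Nat.cast_sub hle]
        push_cast
        ring
      · simp only [hN', if_neg hk, Nat.sub_zero]
        push_cast
        ring
    set X : Fin d → ℤ := ∑ k, ((N' k : ℕ) : ℤ) • a k with hX
    have hXmem : X ∈ NAint a := natcomb_mem a N'
    set v'' : Fin n → ℕ := fun k => if k ∈ τ then v k + M else 0 with hv''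
    refine hnot ⟨v'', ?_, m₀ + X, AddSubmonoid.add_mem _ hm₀ hXmem, ?_⟩
    · intro j hj
      simp only [hv'']
      rw [if_neg hj]
    have hcoef : ∀ j, (((u + v'') j : ℕ) : ℤ)
        = (((u + v) j : ℕ) : ℤ) + (if j ∈ τ then (M:ℤ) else 0)
          - (if j = j0 then (p:ℤ) else 0) := by
      intro j
      simp only [Pi.add_apply, hv'']
      by_cases hjτ : j ∈ τ
      · have hjj0 : j ≠ j0 := fun hh => hj0τ (hh ▸ hjτ)
        rw [if_pos hjτ, if_pos hjτ, if_neg hjj0]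
        push_cast
        ring
      · rw [if_neg hjτ, if_neg hjτ]
        by_cases hjj : j = j0
        · rw [if_pos hjj, hjj]
          push_cast
          rw [hp']
          ring
        · rw [if_neg hjj]
          rw [hvsupp j (by simp [Set.mem_union, Set.mem_singleton_iff, hjτ, hjj])]
          push_cast
          ring
    have hcollapseQ : ∑ k, (if k = j0 then (p:ℚ) else 0) • aQ a k = (p:ℚ) • aQ a j0 := by
      simp [ite_smul]
    have hMγ : ∑ k, (if k ∈ τ then ((M:ℕ):ℚ) else 0) • aQ a k = ((M:ℕ):ℚ) • γQ := by
      rw [hγQ, Finset.smul_sum]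
      refine Finset.sum_congr rfl fun k _ => ?_
      by_cases hk : k ∈ τ <;> simp [hk]
    have hQvec : ∑ k, (((N' k : ℕ):ℚ)) • aQ a k
        = ∑ k, (if k ∈ τ then ((M:ℕ):ℚ) else 0) • aQ a k - (p:ℚ) • aQ a j0 := by
      have hterm : ∀ k, (((N' k : ℕ):ℚ))
          = (p:ℚ) * (nn k : ℚ) - (if k = j0 then (p:ℚ) else 0) := by
        intro k
        by_cases hk : k = j0
        · rw [if_pos hk]
          have h1 := hN'cast k
          rw [if_pos hk] at h1
          exact_mod_cast congrArg (fun z : ℤ => (z : ℚ)) h1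
        · rw [if_neg hk]
          have h1 := hN'cast k
          rw [if_neg hk] at h1
          exact_mod_cast congrArg (fun z : ℤ => (z : ℚ)) h1
      calc ∑ k, ((N' k : ℕ):ℚ) • aQ a k
          = ∑ k, ((p:ℚ) * (nn k:ℚ)) • aQ a k
            - ∑ k, (if k = j0 then (p:ℚ) else 0) • aQ a k := by
            rw [← Finset.sum_sub_distrib]
            refine Finset.sum_congr rfl fun k _ => ?_
            rw [hterm k, sub_smul]
        _ = (p:ℚ) • ((D:ℚ) • γQ) - (p:ℚ) • aQ a j0 := by
            rw [hcollapseQ]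
            congr 1
            calc ∑ k, ((p:ℚ) * (nn k:ℚ)) • aQ a k = (p:ℚ) • ∑ k, (nn k:ℚ) • aQ a k := by
                  rw [Finset.smul_sum]
                  exact Finset.sum_congr rfl fun k _ => mul_smul _ _ _
              _ = (p:ℚ) • ((D:ℚ) • γQ) := by
                  congr 1
                  calc ∑ k, (nn k:ℚ) • aQ a k = ∑ k, ((D:ℚ) * q k) • aQ a k :=
                        Finset.sum_congr rfl fun k _ => by rw [hnn k]
                    _ = (D:ℚ) • ∑ k, q k • aQ a k := by
                        rw [Finset.smul_sum]
                        exact Finset.sum_congr rfl fun k _ => mul_smul _ _ _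
                    _ = (D:ℚ) • γQ := by rw [hqsum]
        _ = ∑ k, (if k ∈ τ then ((M:ℕ):ℚ) else 0) • aQ a k - (p:ℚ) • aQ a j0 := by
            rw [hMγ, smul_smul]
            congr 2
            rw [hM]
            push_cast
            ring
    have hZvec : ∑ k, (if k ∈ τ then (M:ℤ) else 0) • a k - (p:ℤ) • a j0 = X := by
      apply castVec_inj
      intro i
      have hQ := congrFun hQvec i
      simp only [Pi.sub_apply, Finset.sum_apply, Pi.smul_apply, smul_eq_mul, aQ] at hQ
      simp only [hX, Pi.sub_apply, Finset.sum_apply, Pi.smul_apply, smul_eq_mul]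
      push_cast [apply_ite (fun z : ℤ => (z : ℚ))]
      rw [← hQ]
    have hcollapseZ : ∑ j, (if j = j0 then (p:ℤ) else 0) • a j = (p:ℤ) • a j0 := by
      simp [ite_smul]
    calc ∑ j, (((u + v'') j : ℕ) : ℤ) • a j
        = ∑ j, ((((u + v) j : ℕ) : ℤ) • a j + (if j ∈ τ then (M:ℤ) else 0) • a j
            - (if j = j0 then (p:ℤ) else 0) • a j) := by
          refine Finset.sum_congr rfl fun j _ => ?_
          rw [hcoef j, sub_smul, add_smul]
      _ = (χ + m₀) + (∑ j, (if j ∈ τ then (M:ℤ) else 0) • a j - (p:ℤ) • a j0) := by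
          rw [Finset.sum_sub_distrib, Finset.sum_add_distrib, heq, hcollapseZ]
          abel
      _ = χ + (m₀ + X) := by rw [hZvec]; abel
end
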